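/- arXiv:math/0611403 — 2 statements merged into one kernel-verified Lean document; each statement's English description precedes it below -/
import Mathlib

section
/- Let G be a non-trivial finite p-group. If every element of G has order at most 3 and G contains no subgroup isomorphic to C_p × C_p, then G is isomorphic to C_2 or C_3. -/
/-- A non-trivial finite `p`-group all of whose elements have order at most 3 and which has
no subgroup isomorphic to `C_p × C_p` is isomorphic to `C₂` or `C₃`. -/
theorem stmt_1 (p n : ℕ) (hp : p.Prime) (hn : 1 ≤ n) (G : Type*) [Group G]
    (hG : Nat.card G = p ^ n)
    (hord : ∀ g : G, orderOf g ≤ 3)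
    (hpp : ¬ ∃ H : Subgroup G,
      Nonempty (H ≃* Multiplicative (ZMod p) × Multiplicative (ZMod p))) :
    Nonempty (G ≃* Multiplicative (ZMod 2)) ∨ Nonempty (G ≃* Multiplicative (ZMod 3)) := by
  have hFact : Fact p.Prime := ⟨hp⟩
  have hfin : Finite G := Nat.finite_of_card_ne_zero (by
    rw [hG]; exact pow_ne_zero _ hp.ne_zero)
  -- p ≤ 3
  obtain ⟨g, hg⟩ := exists_prime_orderOf_dvd_card' (G := G) p
    (by rw [hG]; exact dvd_pow_self p (by omega))
  have hp3 : p ≤ 3 := hg ▸ hord g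
  have hp2 : 2 ≤ p := hp.two_le
  -- show n = 1
  have hn1 : n = 1 := by
    by_contra hne
    have hn2 : 2 ≤ n := by omega
    obtain ⟨H, hH⟩ := Sylow.exists_subgroup_card_pow_prime (G := G) p (n := 2)
      (by rw [hG]; exact pow_dvd_pow p hn2)
    -- H is a commutative group of order p^2
    letI : CommGroup H := IsPGroup.commGroupOfCardEqPrimeSq hH
    have hfinH : Finite H := Nat.finite_of_card_ne_zero (by
      rw [hH]; exact pow_ne_zero _ hp.ne_zero)
    have hordH : ∀ x : H, x ≠ 1 → orderOf x = p := by
      intro x hx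
      have h1 : orderOf x ∣ p ^ 2 := hH ▸ orderOf_dvd_natCard x
      obtain ⟨i, hi2, hi⟩ := (Nat.dvd_prime_pow hp).mp h1
      interval_cases i
      · simp at hi; exact absurd hi hx
      · simpa using hi
      · exfalso
        have := hord (x : G)
        rw [Subgroup.orderOf_coe, hi] at this
        nlinarith
    obtain ⟨g₀, hg₀⟩ := exists_prime_orderOf_dvd_card' (G := H) p
      (by rw [hH]; exact dvd_pow_self p two_ne_zero)
    have hcardzg : Nat.card (Subgroup.zpowers g₀) = p := by
      rw [Nat.card_zpowers, hg₀]
    -- find h₀ ∉ zpowers g₀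
    have hne_top : Subgroup.zpowers g₀ ≠ ⊤ := by
      intro h
      have := Subgroup.card_eq_iff_eq_top (Subgroup.zpowers g₀) |>.mpr h
      rw [hcardzg, hH] at this
      nlinarith
    obtain ⟨h₀, hh₀⟩ : ∃ h₀ : H, h₀ ∉ Subgroup.zpowers g₀ := by
      by_contra hc
      push_neg at hc
      exact hne_top ((Subgroup.eq_top_iff' _).mpr hc)
    have hh₀1 : h₀ ≠ 1 := fun h => hh₀ (h ▸ (Subgroup.zpowers g₀).one_mem)
    have hordh₀ : orderOf h₀ = p := hordH h₀ hh₀1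
    have hcardzh : Nat.card (Subgroup.zpowers h₀) = p := by
      rw [Nat.card_zpowers, hordh₀]
    -- the intersection of the two cyclic subgroups is trivial
    have hinf : Subgroup.zpowers g₀ ⊓ Subgroup.zpowers h₀ = ⊥ := by
      by_contra hbot
      obtain ⟨x, hx, hx1⟩ := (Subgroup.bot_or_exists_ne_one _).resolve_left hbot
      have hxg : x ∈ Subgroup.zpowers g₀ := hx.1
      have hxh : x ∈ Subgroup.zpowers h₀ := hx.2
      have hordx : orderOf x = p := hordH x hx1
      have hle : Subgroup.zpowers x ≤ Subgroup.zpowers h₀ :=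
        (Subgroup.zpowers_le).mpr hxh
      have heq : Subgroup.zpowers x = Subgroup.zpowers h₀ :=
        Subgroup.eq_of_le_of_card_ge hle (by
          rw [Nat.card_zpowers, Nat.card_zpowers, hordx, hordh₀])
      have : h₀ ∈ Subgroup.zpowers x := heq ▸ Subgroup.mem_zpowers h₀
      exact hh₀ ((Subgroup.zpowers_le.mpr hxg) this)
    -- build the isomorphism
    have hcyc₁ : IsCyclic (Subgroup.zpowers g₀) := isCyclic_of_prime_card hcardzg
    have hcyc₂ : IsCyclic (Subgroup.zpowers h₀) := isCyclic_of_prime_card hcardzh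
    let e₁ : Multiplicative (ZMod p) ≃* Subgroup.zpowers g₀ :=
      hcardzg ▸ zmodCyclicMulEquiv hcyc₁
    let e₂ : Multiplicative (ZMod p) ≃* Subgroup.zpowers h₀ :=
      hcardzh ▸ zmodCyclicMulEquiv hcyc₂
    let φ : Multiplicative (ZMod p) × Multiplicative (ZMod p) →* H :=
      MonoidHom.coprod ((Subgroup.zpowers g₀).subtype.comp e₁.toMonoidHom)
        ((Subgroup.zpowers h₀).subtype.comp e₂.toMonoidHom)
    have hinj : Function.Injective φ := by
      rw [injective_iff_map_eq_one]
      rintro ⟨a, b⟩ hab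
      have hab' : ((e₁ a : H) : H) * ((e₂ b : H) : H) = 1 := hab
      have hmem : ((e₁ a : H)) = ((e₂ b)⁻¹ : Subgroup.zpowers h₀) := by
        have : ((e₁ a : H) : H) = (((e₂ b)⁻¹ : Subgroup.zpowers h₀) : H) := by
          push_cast
          rw [eq_inv_iff_mul_eq_one]
          exact hab'
        exact this
      have hm : ((e₁ a : H) : H) ∈ Subgroup.zpowers g₀ ⊓ Subgroup.zpowers h₀ := by
        constructor
        · exact (e₁ a).2
        · rw [hmem]; exact ((e₂ b)⁻¹).2
      rw [hinf, Subgroup.mem_bot] at hm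
      have ha : e₁ a = 1 := Subtype.ext hm
      have hb : e₂ b = 1 := by
        have : (((e₂ b)⁻¹ : Subgroup.zpowers h₀) : H) = 1 := by rw [← hmem, hm]
        have : ((e₂ b)⁻¹ : Subgroup.zpowers h₀) = 1 := Subtype.ext this
        rwa [inv_eq_one] at this
      have ha' : a = 1 := e₁.injective (by simpa using ha)
      have hb' : b = 1 := e₂.injective (by simpa using hb)
      exact Prod.ext ha' hb'
    have hcards : Nat.card (Multiplicative (ZMod p) × Multiplicative (ZMod p)) = Nat.card H := by
      rw [Nat.card_prod, hH]
      simp [Nat.card_eq_fintype_card, ZMod.card, sq]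
    have hbij : Function.Bijective φ :=
      (Nat.bijective_iff_injective_and_card φ).mpr ⟨hinj, hcards⟩
    exact hpp ⟨H, ⟨(MulEquiv.ofBijective φ hbij).symm⟩⟩
  -- now Nat.card G = p, so G is cyclic of prime order
  rw [hn1, pow_one] at hG
  have hcyc : IsCyclic G := isCyclic_of_prime_card hG
  have e : G ≃* Multiplicative (ZMod (Nat.card G)) := (zmodCyclicMulEquiv hcyc).symm
  interval_cases p
  · rw [hG] at e; exact Or.inl ⟨e⟩
  · rw [hG] at e; exact Or.inr ⟨e⟩
end

section
/- Let k be a field of characteristic p and G a cyclic group of order n ≥ 4 with n a power of p, with generator σ. Let M = kG/((σ−1)^2 · kG) be the cyclic kG-module of length two. Then multiplication by (σ − 1) on M is a non-zero map that does not factor through the projective module kG. -/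
set_option maxHeartbeats 1000000

open Polynomial

/-- Auxiliary ring-theoretic facts about `t = σ - 1` in `kG` for `G` cyclic of `p`-power
order `n ≥ 4` over `k` of characteristic `p`: `t² ∤ t`, and any annihilator of `t²` is
divisible by `t²`. -/
theorem stmt_9_aux (k : Type*) [Field k] (p n : ℕ) (hp : p.Prime) (hchar : ringChar k = p)
    (hn : ∃ m : ℕ, n = p ^ m) (hn4 : 4 ≤ n) :
    ¬ ((MonoidAlgebra.of k (Multiplicative (ZMod n)) (Multiplicative.ofAdd 1) - 1) ^ 2 ∣
        (MonoidAlgebra.of k (Multiplicative (ZMod n)) (Multiplicative.ofAdd 1) - 1)) ∧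
    ∀ x : MonoidAlgebra k (Multiplicative (ZMod n)),
      (MonoidAlgebra.of k (Multiplicative (ZMod n)) (Multiplicative.ofAdd 1) - 1) ^ 2 * x = 0 →
      (MonoidAlgebra.of k (Multiplicative (ZMod n)) (Multiplicative.ofAdd 1) - 1) ^ 2 ∣ x := by
  haveI : NeZero n := ⟨by omega⟩
  haveI : CharP k p := hchar ▸ ringChar.charP k
  haveI : Fact p.Prime := ⟨hp⟩
  set G := Multiplicative (ZMod n) with hG
  set A := MonoidAlgebra k G with hA
  set σ : G := Multiplicative.ofAdd 1 with hσ
  set t : A := MonoidAlgebra.of k G σ - 1 with ht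
  set ψ : k[X] →ₐ[k] A := Polynomial.aeval (MonoidAlgebra.of k G σ) with hψ
  have hψX : ψ X = MonoidAlgebra.of k G σ := Polynomial.aeval_X _
  -- σ powers
  have hpow : ∀ j : ℕ, σ ^ j = Multiplicative.ofAdd ((j : ZMod n)) := by
    intro j
    induction j with
    | zero => simp [hσ]
    | succ j ih =>
        rw [pow_succ, ih, hσ, ← ofAdd_add]
        push_cast
        ring_nf
  have hσn : σ ^ n = 1 := by
    rw [hpow n, ZMod.natCast_self]
    rfl
  have key0 : ψ (X ^ n - 1) = 0 := by
    rw [map_sub, map_pow, hψX, map_one, ← map_pow (MonoidAlgebra.of k G), hσn, map_one, sub_self]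
  -- (X - 1)^n = X^n - 1 in char p
  obtain ⟨m, hm⟩ := hn
  have hXn : ((X : k[X]) - 1) ^ n = X ^ n - 1 := by
    rw [hm, sub_pow_char_pow, one_pow]
  -- surjectivity of ψ
  have hsurj : Function.Surjective ψ := by
    intro x
    induction x using MonoidAlgebra.induction_on with
    | of g =>
        refine ⟨X ^ (Multiplicative.toAdd g).val, ?_⟩
        rw [map_pow, hψX, ← map_pow (MonoidAlgebra.of k G)]
        congr 1
        rw [hpow, ZMod.natCast_val, ZMod.cast_id]
        exact ofAdd_toAdd g
    | add f g hf hg =>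
        obtain ⟨a, rfl⟩ := hf; obtain ⟨b, rfl⟩ := hg
        exact ⟨a + b, map_add ψ a b⟩
    | smul r f hf =>
        obtain ⟨a, rfl⟩ := hf
        exact ⟨r • a, map_smul ψ r a⟩
  -- kernel of ψ
  have hmonic : ((X : k[X]) ^ n - 1).Monic := by
    have := Polynomial.monic_X_pow_sub_C (1 : k) (show n ≠ 0 by omega)
    simpa using this
  set Φ : AdjoinRoot ((X : k[X]) ^ n - 1) →ₐ[k] A :=
    AdjoinRoot.liftAlgHom _ (Algebra.ofId k A) (MonoidAlgebra.of k G σ) key0 with hΦ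
  have hΦmk : ∀ q : k[X], Φ (AdjoinRoot.mk _ q) = ψ q := fun q => AdjoinRoot.liftAlgHom_mk _ _ _ key0 q
  have hΦsurj : Function.Surjective Φ := by
    intro x
    obtain ⟨q, hq⟩ := hsurj x
    exact ⟨AdjoinRoot.mk _ q, by rw [hΦmk, hq]⟩
  let pb := AdjoinRoot.powerBasis' hmonic
  haveI : Module.Finite k (AdjoinRoot ((X : k[X]) ^ n - 1)) := pb.finite
  have hfr : Module.finrank k (AdjoinRoot ((X : k[X]) ^ n - 1)) = Module.finrank k A := by
    have h1 : Module.finrank k (AdjoinRoot ((X : k[X]) ^ n - 1)) = n := by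
      rw [pb.finrank]
      show ((X : k[X]) ^ n - 1).natDegree = n
      have : ((X : k[X]) ^ n - C 1).natDegree = n := Polynomial.natDegree_X_pow_sub_C
      simpa using this
    have b : Module.Basis G k A := MonoidAlgebra.basis G k
    have h2 : Module.finrank k A = n := by
      rw [Module.finrank_eq_card_basis b]
      simp [hG, ZMod.card]
    rw [h1, h2]
  have bA : Module.Basis G k A := MonoidAlgebra.basis G k
  haveI : Module.Finite k A := Module.Finite.of_basis bA
  have hΦinj : Function.Injective Φ :=
    (LinearMap.injective_iff_surjective_of_finrank_eq_finrank (f := Φ.toLinearMap) hfr).mpr hΦsurj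
  have hker : ∀ q : k[X], ψ q = 0 → ((X : k[X]) ^ n - 1) ∣ q := by
    intro q h
    have h0 : Φ (AdjoinRoot.mk _ q) = Φ 0 := by rw [hΦmk, h, map_zero]
    exact AdjoinRoot.mk_eq_zero.mp (hΦinj h0)
  have hψX1 : ψ (X - 1) = t := by rw [map_sub, hψX, map_one]
  -- t ^ (n-1) ≠ 0
  have htn1 : t ^ (n - 1) ≠ 0 := by
    intro h
    have h0 : ψ ((X - 1) ^ (n - 1)) = 0 := by rw [map_pow, hψX1, h]
    have hd := hker _ h0
    rw [← hXn] at hd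
    have hXne : (X - 1 : k[X]) ≠ 0 := by
      simpa using Polynomial.X_sub_C_ne_zero (1 : k)
    have hXnu : ¬ IsUnit (X - 1 : k[X]) := by
      simpa using Polynomial.not_isUnit_X_sub_C (1 : k)
    have := (pow_dvd_pow_iff hXne hXnu).mp hd
    omega
  -- t ^ n = 0
  have htn : t ^ n = 0 := by
    have : ψ ((X - 1) ^ n) = t ^ n := by rw [map_pow, hψX1]
    rw [hXn, key0] at this
    exact this.symm
  -- fact 1 : ¬ t^2 ∣ t
  have fact1 : ¬ t ^ 2 ∣ t := by
    rintro ⟨c, hc⟩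
    apply htn1
    have h1 : n - 1 = (n - 2) + 1 := by omega
    have h2 : (n - 2) + 2 = n := by omega
    calc t ^ (n - 1) = t ^ (n - 2) * t := by rw [h1, pow_succ]
      _ = t ^ (n - 2) * (t ^ 2 * c) := by rw [← hc]
      _ = (t ^ (n - 2) * t ^ 2) * c := by ring
      _ = t ^ n * c := by rw [← pow_add, h2]
      _ = 0 := by rw [htn, zero_mul]
  refine ⟨fact1, ?_⟩
  -- fact 2 : annihilators of t² are divisible by t²
  intro x hx
  obtain ⟨q, rfl⟩ := hsurj x
  have h0 : ψ ((X - 1) ^ 2 * q) = 0 := by rw [map_mul, map_pow, hψX1]; exact hx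
  obtain ⟨h, hh⟩ := hker _ h0
  rw [← hXn] at hh
  have hXne : (X - 1 : k[X]) ≠ 0 := by
    simpa using Polynomial.X_sub_C_ne_zero (1 : k)
  have hq : q = (X - 1) ^ (n - 2) * h := by
    apply mul_left_cancel₀ (pow_ne_zero 2 hXne)
    rw [hh, ← mul_assoc, ← pow_add]
    congr 2
    omega
  rw [hq, map_mul, map_pow, hψX1]
  refine Dvd.dvd.mul_right ?_ _
  calc t ^ 2 ∣ t ^ (n - 2) := pow_dvd_pow t (by omega)
    _ ∣ t ^ (n - 2) := dvd_rfl

/-- Over `k` of characteristic `p` and `G` cyclic of order `n ≥ 4` a power of `p` with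
generator `σ`, multiplication by `σ - 1` on the length-two cyclic module
`M = kG/((σ-1)²)` is a non-zero `kG`-module map which does not factor through the
projective module `kG`. -/
theorem stmt_9 (k : Type*) [Field k] (p n : ℕ) (hp : p.Prime) (hchar : ringChar k = p)
    (hn : ∃ m : ℕ, n = p ^ m) (hn4 : 4 ≤ n) :
    let A := MonoidAlgebra k (Multiplicative (ZMod n))
    let σ : Multiplicative (ZMod n) := Multiplicative.ofAdd 1
    let I : Ideal A := Ideal.span {(MonoidAlgebra.of k (Multiplicative (ZMod n)) σ - 1) ^ 2}
    ∃ f : (A ⧸ I) →ₗ[A] (A ⧸ I),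
      (∀ m : A ⧸ I,
        f m = Ideal.Quotient.mk I (MonoidAlgebra.of k (Multiplicative (ZMod n)) σ - 1) * m) ∧
      f ≠ 0 ∧
      ¬ ∃ (a : (A ⧸ I) →ₗ[A] A) (b : A →ₗ[A] (A ⧸ I)), f = b.comp a := by
  intro A σ I
  obtain ⟨h1, h2⟩ := stmt_9_aux k p n hp hchar hn hn4
  set t : A := MonoidAlgebra.of k (Multiplicative (ZMod n)) σ - 1 with ht
  set τ : A ⧸ I := Ideal.Quotient.mk I t with hτ
  refine ⟨LinearMap.mul A (A ⧸ I) τ, fun m => rfl, ?_, ?_⟩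
  · intro hf
    have h0 : τ * 1 = 0 := by
      have := LinearMap.congr_fun hf (1 : A ⧸ I)
      simpa using this
    rw [mul_one, hτ] at h0
    have := Ideal.Quotient.eq_zero_iff_mem.mp h0
    exact h1 (Ideal.mem_span_singleton.mp this)
  · rintro ⟨a, b, hab⟩
    set x : A := a 1 with hx
    -- t² * x = 0
    have hIt2 : (Ideal.Quotient.mk I) (t ^ 2) = 0 :=
      Ideal.Quotient.eq_zero_iff_mem.mpr (Ideal.mem_span_singleton.mpr dvd_rfl)
    have hsmul : ∀ (r z : A), r • (Ideal.Quotient.mk I z) = Ideal.Quotient.mk I (r * z) := by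
      intro r z
      rw [← Ideal.Quotient.mk_eq_mk, ← Ideal.Quotient.mk_eq_mk, ← Submodule.Quotient.mk_smul,
        smul_eq_mul]
    have hsm : (t ^ 2) • (1 : A ⧸ I) = 0 := by
      rw [show (1 : A ⧸ I) = Ideal.Quotient.mk I 1 from rfl, hsmul, mul_one, hIt2]
    have hxann : t ^ 2 * x = 0 := by
      have := a.map_smul (t ^ 2) (1 : A ⧸ I)
      rw [hsm, map_zero] at this
      rw [hx, ← smul_eq_mul]
      exact this.symm
    have hdvd : t ^ 2 ∣ x := h2 x hxann
    -- b (a 1) = τ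
    have hba : b (a 1) = τ := by
      have := LinearMap.congr_fun hab (1 : A ⧸ I)
      simp only [LinearMap.comp_apply] at this
      rw [← this]
      simp [LinearMap.mul_apply']
    obtain ⟨y, hy⟩ := Ideal.Quotient.mk_surjective (b (1 : A))
    have hbx : b x = Ideal.Quotient.mk I (x * y) := by
      have h1' : b x = x • b 1 := by rw [← map_smul, smul_eq_mul, mul_one]
      rw [h1', ← hy, hsmul]
    have hmem : t - x * y ∈ I := by
      rw [← Ideal.Quotient.eq_zero_iff_mem, map_sub, ← hbx, hx, hba, hτ, sub_self]
    have hdvd2 : t ^ 2 ∣ t - x * y := Ideal.mem_span_singleton.mp hmem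
    have hfin : t ^ 2 ∣ t := by
      have h := dvd_add hdvd2 (hdvd.mul_right y)
      simpa using h
    exact h1 hfin
end
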